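/- Let A be a symmetric 3×3 complex matrix and τ ∈ ℂ. Define τ_i = A_{ii}τ for i ∈ {1,2,3}, τ_{ik} = (A_{ii}A_{kk} − A_{ik}A_{ki})τ for distinct i,k, and τ_{123} = det(A)·τ. Then these quantities satisfy the discrete CKP equation (τ·τ_{123} + τ_1·τ_{23} − τ_2·τ_{13} − τ_3·τ_{12})² − 4(τ_{12}·τ_{13} − τ_1·τ_{123})(τ_2·τ_3 − τ·τ_{23}) = 0. Equivalently, the principal minors of any symmetric 3×3 complex matrix satisfy the Holtz–Sturmfels relation (1·detA + A_{11}m_{23} − A_{22}m_{13} − A_{33}m_{12})² = 4(m_{12}m_{13} − A_{11}detA)(A_{22}A_{33} − m_{23}), where m_{ik} = A_{ii}A_{kk} − A_{ik}². -/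
import Mathlib

/-- The principal minors of a symmetric 3×3 complex matrix satisfy the discrete CKP
equation `(ττ₁₂₃ + τ₁τ₂₃ − τ₂τ₁₃ − τ₃τ₁₂)² − 4(τ₁₂τ₁₃ − τ₁τ₁₂₃)(τ₂τ₃ − ττ₂₃) = 0`,
where `τᵢ = Aᵢᵢτ`, `τᵢₖ = (AᵢᵢAₖₖ − AᵢₖAₖᵢ)τ`, `τ₁₂₃ = det(A)·τ`; equivalently,
the Holtz–Sturmfels relation for the principal minors of `A` holds. -/
theorem symmetric_principal_minors_dCKP (A : Matrix (Fin 3) (Fin 3) ℂ)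
    (hA : A.IsSymm) (τ : ℂ) :
    (τ * (A.det * τ)
          + (A 0 0 * τ) * ((A 1 1 * A 2 2 - A 1 2 * A 2 1) * τ)
          - (A 1 1 * τ) * ((A 0 0 * A 2 2 - A 0 2 * A 2 0) * τ)
          - (A 2 2 * τ) * ((A 0 0 * A 1 1 - A 0 1 * A 1 0) * τ)) ^ 2
        - 4 * (((A 0 0 * A 1 1 - A 0 1 * A 1 0) * τ) * ((A 0 0 * A 2 2 - A 0 2 * A 2 0) * τ)
              - (A 0 0 * τ) * (A.det * τ))
            * ((A 1 1 * τ) * (A 2 2 * τ) - τ * ((A 1 1 * A 2 2 - A 1 2 * A 2 1) * τ))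
        = 0
      ∧ (1 * A.det
            + A 0 0 * (A 1 1 * A 2 2 - A 1 2 ^ 2)
            - A 1 1 * (A 0 0 * A 2 2 - A 0 2 ^ 2)
            - A 2 2 * (A 0 0 * A 1 1 - A 0 1 ^ 2)) ^ 2
        = 4 * ((A 0 0 * A 1 1 - A 0 1 ^ 2) * (A 0 0 * A 2 2 - A 0 2 ^ 2) - A 0 0 * A.det)
            * (A 1 1 * A 2 2 - (A 1 1 * A 2 2 - A 1 2 ^ 2)) := by
  have h10 : A 1 0 = A 0 1 := by rw [← Matrix.IsSymm.apply hA 1 0]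
  have h20 : A 2 0 = A 0 2 := by rw [← Matrix.IsSymm.apply hA 2 0]
  have h21 : A 2 1 = A 1 2 := by rw [← Matrix.IsSymm.apply hA 2 1]
  rw [Matrix.det_fin_three, h10, h20, h21]
  constructor <;> ring
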